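/- For every complex number x with x² − x + 1 ≠ 0 and 16·x² − 16·x + 13 ≠ 0, setting z = −48/(x² − x + 1) one has z + 256 ≠ 0 and the identity 1728·z²/(z + 256)³ = 972·(x² − x + 1)/(16·x² − 16·x + 13)³. -/

import Mathlib

/-- Companion Hauptmodul identity: with `z = −48/(x² − x + 1)`, one has `z + 256 ≠ 0` and
`1728z²/(z+256)³ = 972(x² − x + 1)/(16x² − 16x + 13)³`. -/
theorem hauptmodul_level2_companion (x : ℂ) (hq : x ^ 2 - x + 1 ≠ 0)
    (hc : 16 * x ^ 2 - 16 * x + 13 ≠ 0) :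
    let z : ℂ := -48 / (x ^ 2 - x + 1)
    z + 256 ≠ 0 ∧
      1728 * z ^ 2 / (z + 256) ^ 3 =
        972 * (x ^ 2 - x + 1) / (16 * x ^ 2 - 16 * x + 13) ^ 3 := by
  intro z
  have hz : z + 256 = 16 * (16 * x ^ 2 - 16 * x + 13) / (x ^ 2 - x + 1) := by
    show -48 / (x ^ 2 - x + 1) + 256 = _
    rw [eq_div_iff hq, add_mul, div_mul_cancel₀ _ hq]
    ring
  have hne : z + 256 ≠ 0 := by
    rw [hz]
    exact div_ne_zero (by simpa using hc) hq
  refine ⟨hne, ?_⟩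
  rw [hz]
  show 1728 * (-48 / (x ^ 2 - x + 1)) ^ 2 / _ = _
  field_simp
  ring
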